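/- Let E be a monotonically complete AM-space with the Fatou property and (T_i)_{i∈I} a commuting family of positive linear contractions on E. Then the common fixed space F, with the inherited order and norm, is an AM-space: for f, g ∈ F₊, the norm of their supremum taken within F equals max(‖f‖, ‖g‖). -/

import Mathlib

/-- Remark (a): if `E` is moreover an AM-space, then the common fixed space `F`
is an AM-space as well: for positive `f, g ∈ F`, the supremum of `f` and `g`
taken within `F` has norm `max ‖f‖ ‖g‖`. -/
theorem fixed_space_is_AM_space
    {E : Type*} [NormedAddCommGroup E] [Lattice E] [IsOrderedAddMonoid E] [HasSolidNorm E] [NormedSpace ℝ E] [CompleteSpace E]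
    -- `E` is an AM-space
    (hAM : ∀ f g : E, 0 ≤ f → 0 ≤ g → ‖f ⊔ g‖ = max ‖f‖ ‖g‖)
    (hmc : ∀ D : Set E, D.Nonempty → DirectedOn (· ≤ ·) D → (∀ x ∈ D, 0 ≤ x) →
      (∃ C : ℝ, ∀ x ∈ D, ‖x‖ ≤ C) → ∃ b : E, IsLUB D b)
    (hfatou : ∀ (D : Set E) (b : E), D.Nonempty → DirectedOn (· ≤ ·) D →
      (∀ x ∈ D, 0 ≤ x) → IsLUB D b → ‖b‖ = ⨆ x : D, ‖(x : E)‖)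
    {I : Type*} (T : I → E →L[ℝ] E)
    (hpos : ∀ i, ∀ x : E, 0 ≤ x → 0 ≤ T i x) (hcontr : ∀ i, ‖T i‖ ≤ 1)
    (hcomm : ∀ i j, (T i).comp (T j) = (T j).comp (T i)) :
    ∀ f g : E, (∀ i, T i f = f) → (∀ i, T i g = g) → 0 ≤ f → 0 ≤ g →
      ∃ m : E, IsLeast {h : E | (∀ i, T i h = h) ∧ f ≤ h ∧ g ≤ h} m ∧
        ‖m‖ = max ‖f‖ ‖g‖ := by
  intro f g hf hg hf0 hg0
  -- T i is monotone
  have hmono : ∀ i, ∀ x y : E, x ≤ y → T i x ≤ T i y := by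
    intro i x y hxy
    have := hpos i (y - x) (by simpa using hxy)
    have h2 : T i y - T i x = T i (y - x) := by
      rw [map_sub]
    exact sub_nonneg.mp (by rw [h2]; exact this)
  -- T i is a contraction
  have hnorm : ∀ i, ∀ x : E, ‖T i x‖ ≤ ‖x‖ := by
    intro i x
    calc ‖T i x‖ ≤ ‖T i‖ * ‖x‖ := (T i).le_opNorm x
    _ ≤ 1 * ‖x‖ := by
        exact mul_le_mul_of_nonneg_right (hcontr i) (norm_nonneg x)
    _ = ‖x‖ := one_mul _
  have hcomm' : ∀ i j, ∀ x : E, T i (T j x) = T j (T i x) := by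
    intro i j x
    exact ContinuousLinearMap.ext_iff.mp (hcomm i j) x
  set h₀ : E := f ⊔ g with hh₀
  have hh₀0 : 0 ≤ h₀ := le_trans hf0 le_sup_left
  -- the auxiliary set
  set G : Set E :=
    {x | h₀ ≤ x ∧ ‖x‖ ≤ ‖h₀‖ ∧ (∀ i, x ≤ T i x) ∧
      ∀ h : E, (∀ i, T i h = h) → f ≤ h → g ≤ h → x ≤ h} with hG
  have hGpos : ∀ x ∈ G, 0 ≤ x := fun x hx => le_trans hh₀0 hx.1
  have hh₀G : h₀ ∈ G := by
    refine ⟨le_refl _, le_refl _, ?_, ?_⟩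
    · intro i
      have h1 : f ≤ T i h₀ := by
        rw [← hf i]; exact hmono i f h₀ le_sup_left
      have h2 : g ≤ T i h₀ := by
        rw [← hg i]; exact hmono i g h₀ le_sup_right
      exact sup_le h1 h2
    · intro h _ hfh hgh
      exact sup_le hfh hgh
  have hGne : G.Nonempty := ⟨h₀, hh₀G⟩
  -- G is closed under suprema, hence directed
  have hGsup : ∀ x ∈ G, ∀ y ∈ G, x ⊔ y ∈ G := by
    intro x hx y hy
    obtain ⟨hx1, hx2, hx3, hx4⟩ := hx
    obtain ⟨hy1, hy2, hy3, hy4⟩ := hy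
    refine ⟨le_trans hx1 le_sup_left, ?_, ?_, ?_⟩
    · rw [hAM x y (hGpos x ⟨hx1, hx2, hx3, hx4⟩) (hGpos y ⟨hy1, hy2, hy3, hy4⟩)]
      exact max_le hx2 hy2
    · intro i
      refine sup_le (le_trans (hx3 i) ?_) (le_trans (hy3 i) ?_)
      · exact hmono i x (x ⊔ y) le_sup_left
      · exact hmono i y (x ⊔ y) le_sup_right
    · intro h hh hfh hgh
      exact sup_le (hx4 h hh hfh hgh) (hy4 h hh hfh hgh)
  have hGdir : DirectedOn (· ≤ ·) G := by
    intro x hx y hy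
    exact ⟨x ⊔ y, hGsup x hx y hy, le_sup_left, le_sup_right⟩
  -- b := lub of G
  obtain ⟨b, hb⟩ := hmc G hGne hGdir hGpos ⟨‖h₀‖, fun x hx => hx.2.1⟩
  have hbnorm : ‖b‖ ≤ ‖h₀‖ := by
    rw [hfatou G b hGne hGdir hGpos hb]
    haveI : Nonempty ↥G := ⟨⟨h₀, hh₀G⟩⟩
    exact ciSup_le fun x => x.2.2.1
  -- b ∈ G
  have hbG : b ∈ G := by
    refine ⟨hb.1 hh₀G, hbnorm, ?_, ?_⟩
    · intro i
      refine hb.2 fun x hx => ?_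
      exact le_trans (hx.2.2.1 i) (hmono i x b (hb.1 hx))
    · intro h hh hfh hgh
      exact hb.2 fun x hx => hx.2.2.2 h hh hfh hgh
  -- T i b ∈ G
  have hTbG : ∀ i, T i b ∈ G := by
    intro i
    refine ⟨?_, le_trans (hnorm i b) hbnorm, ?_, ?_⟩
    · exact le_trans (hh₀G.2.2.1 i) (hmono i h₀ b hbG.1)
    · intro j
      calc T i b ≤ T i (T j b) := hmono i b (T j b) (hbG.2.2.1 j)
      _ = T j (T i b) := hcomm' i j b
    · intro h hh hfh hgh
      calc T i b ≤ T i h := hmono i b h (hbG.2.2.2 h hh hfh hgh)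
      _ = h := hh i
  -- b is a fixed point
  have hfix : ∀ i, T i b = b :=
    fun i => le_antisymm (hb.1 (hTbG i)) (hbG.2.2.1 i)
  refine ⟨b, ⟨⟨hfix, le_trans le_sup_left hbG.1, le_trans le_sup_right hbG.1⟩,
    fun h hh => hbG.2.2.2 h hh.1 hh.2.1 hh.2.2⟩, ?_⟩
  have h1 : ‖h₀‖ ≤ ‖b‖ := by
    have habs : |h₀| ≤ |b| := by
      rw [abs_of_nonneg hh₀0, abs_of_nonneg (hGpos b hbG)]
      exact hbG.1
    exact norm_le_norm_of_abs_le_abs habs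
  rw [← hAM f g hf0 hg0]
  exact le_antisymm hbnorm h1
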